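/- For every LR-string S, r(P_L(S)) = r(S) − 2^(−|S|) and r(P_R(S)) = r(S) + 2^(−|S|), where the extensions r(R^{-1}) = 0 and r(L^{-1}) = 2 are used when the parent is a formal inverse symbol. -/

import Mathlib

open List

/-- `r`-value of an LR-string (`true` = R, `false` = L):
`r(ε) = 1`, `r(SL) = r(S) - 2^(-|SL|)`, `r(SR) = r(S) + 2^(-|SR|)`. -/
def rval (S : List Bool) : ℚ :=
  1 + ∑ i ∈ Finset.range S.length,
      (if S.getD i false then ((2:ℚ)^(i+1))⁻¹ else -((2:ℚ)^(i+1))⁻¹)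

/-- Generalized strings: LR-strings plus the formal symbols `R⁻¹ = inv true`
and `L⁻¹ = inv false`. -/
inductive Gen where
  | inv : Bool → Gen
  | str : List Bool → Gen
deriving DecidableEq

/-- Left parent: `P_L(ε) = R⁻¹`, `P_L(SL) = P_L(S)`, `P_L(SR) = S`. -/
def PL (S : List Bool) : Gen :=
  match S.reverse.dropWhile (· = false) with
  | [] => Gen.inv true
  | _ :: t => Gen.str t.reverse

/-- Right parent: `P_R(ε) = L⁻¹`, `P_R(SL) = S`, `P_R(SR) = P_R(S)`. -/
def PR (S : List Bool) : Gen :=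
  match S.reverse.dropWhile (· = true) with
  | [] => Gen.inv false
  | _ :: t => Gen.str t.reverse

/-- Extension of `r` to generalized strings: `r(R⁻¹) = 0`, `r(L⁻¹) = 2`. -/
def rg : Gen → ℚ
  | Gen.inv true => 0
  | Gen.inv false => 2
  | Gen.str S => rval S

/-- Length of a generalized string; the formal symbols have length `-1`. -/
def glen : Gen → ℤ
  | Gen.inv _ => -1
  | Gen.str S => S.length

/-- Position function: `N(ε) = 0`, `N(SL) = 2N(S)+1`, `N(SR) = 2N(S)+2`. -/
def posN (S : List Bool) : ℕ :=
  ∑ i ∈ Finset.range S.length, (if S.getD i false then 2 else 1) * 2^(S.length - 1 - i)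

/-- The alternating-block string `S(k₀,…,k_m) = R^{k₀} L^{k₁} R^{k₂} ⋯`. -/
def blockStr (ks : List ℕ) : List Bool :=
  (ks.zipIdx.map (fun p => List.replicate p.1 (decide (p.2 % 2 = 0)))).flatten

/-- Continued fraction `[q₀,…,q_m]`. -/
def cf : List ℚ → ℚ
  | [] => 0
  | [q] => q
  | q :: qs => q + (cf qs)⁻¹

/-- Admissible continued-fraction index sequences: `[q₀]` with `q₀ ≥ 1`, or
`[q₀,…,q_m]` with `m ≥ 1`, intermediate `qᵢ ≥ 1`, and `q_m ≥ 2`. -/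
def CFAdmissible (qs : List ℕ) : Prop :=
  qs ≠ [] ∧ (qs.length = 1 → 1 ≤ qs.getD 0 0) ∧
    (∀ i, 1 ≤ i → i + 1 < qs.length → 1 ≤ qs.getD i 0) ∧
    (2 ≤ qs.length → 2 ≤ qs.getLastD 0)

/-- The map `f([q₀,…,q_m]) = S(q₀,…,q_{m-1},q_m - 1)`. -/
def cfToStr (qs : List ℕ) : List Bool :=
  blockStr (qs.dropLast ++ [qs.getLastD 0 - 1])


lemma rval_concat (S : List Bool) (b : Bool) :
    rval (S ++ [b]) = rval S +
      (if b then ((2:ℚ)^(S.length+1))⁻¹ else -((2:ℚ)^(S.length+1))⁻¹) := by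
  unfold rval
  rw [List.length_append]
  simp only [List.length_singleton]
  rw [Finset.sum_range_succ]
  have h1 : ∀ i ∈ Finset.range S.length,
      (if (S ++ [b]).getD i false then ((2:ℚ)^(i+1))⁻¹ else -((2:ℚ)^(i+1))⁻¹)
      = (if S.getD i false then ((2:ℚ)^(i+1))⁻¹ else -((2:ℚ)^(i+1))⁻¹) := by
    intro i hi
    rw [Finset.mem_range] at hi
    rw [List.getD_append _ _ _ _ hi]
  rw [Finset.sum_congr rfl h1]
  have h2 : (S ++ [b]).getD S.length false = b := by
    simp [List.getD_append_right, List.getD]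
  rw [h2]
  ring

lemma PL_concat_false (S : List Bool) : PL (S ++ [false]) = PL S := by
  simp [PL, List.dropWhile]

lemma PL_concat_true (S : List Bool) : PL (S ++ [true]) = Gen.str S := by
  simp [PL, List.dropWhile]

lemma PR_concat_true (S : List Bool) : PR (S ++ [true]) = PR S := by
  simp [PR, List.dropWhile]

lemma PR_concat_false (S : List Bool) : PR (S ++ [false]) = Gen.str S := by
  simp [PR, List.dropWhile]

/-- Theorem 2.2(e): `r(P_L(S)) = r(S) - 2^(-|S|)` and
`r(P_R(S)) = r(S) + 2^(-|S|)`. -/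
theorem stmt5 (S : List Bool) :
    rg (PL S) = rval S - ((2 : ℚ) ^ S.length)⁻¹ ∧
      rg (PR S) = rval S + ((2 : ℚ) ^ S.length)⁻¹ := by
  induction S using List.reverseRecOn with
  | nil => norm_num [PL, PR, rg, rval]
  | append_singleton T b ih =>
    obtain ⟨ihL, ihR⟩ := ih
    rw [rval_concat]
    cases b with
    | false =>
      rw [PL_concat_false, PR_concat_false]
      constructor
      · rw [ihL]
        simp only [List.length_append, List.length_singleton, Bool.false_eq_true, ↓reduceIte]
        field_simp
        try ring
      · simp only [rg, List.length_append, List.length_singleton, Bool.false_eq_true, ↓reduceIte]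
        field_simp
        try ring
    | true =>
      rw [PL_concat_true, PR_concat_true]
      constructor
      · simp only [rg, List.length_append, List.length_singleton, Bool.false_eq_true, ↓reduceIte]
        field_simp
        try ring
      · rw [ihR]
        simp only [List.length_append, List.length_singleton, Bool.false_eq_true, ↓reduceIte]
        field_simp
        try ring
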